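/- Let g⁽¹⁾, g⁽²⁾ : (0,∞) → [0,∞) be continuous functions such that the product g⁽¹⁾g⁽²⁾ is integrable on (0,1] and the limit c := lim_{x→0⁺} g⁽¹⁾(x)·g⁽²⁾(x) exists and is finite. Let ρ : [0,1] → ℝ be continuous. Then, writing Δ_n = 1/n, Σ_{i=1}^n ∫_{(i−1)Δ_n}^{iΔ_n} g⁽¹⁾(iΔ_n − s) · g⁽²⁾(iΔ_n − s) · ρ(s) ds → c · ∫₀^1 ρ(s) ds as n → ∞. -/

import Mathlib

open MeasureTheory Filter Set intervalIntegral

/-- If `g⁽¹⁾, g⁽²⁾ : (0,∞) → [0,∞)` are continuous with `g⁽¹⁾g⁽²⁾` integrable on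
`(0,1]` and `g⁽¹⁾(x) g⁽²⁾(x) → c` as `x → 0⁺`, and `ρ : [0,1] → ℝ` is continuous,
then with `Δ_n = 1/n`,
`∑_{i=1}^n ∫_{(i-1)Δ_n}^{iΔ_n} g⁽¹⁾(iΔ_n - s) g⁽²⁾(iΔ_n - s) ρ s ds → c ∫₀¹ ρ`. -/
theorem riemann_type_limit_of_kernel_sums
    (g1 g2 : ℝ → ℝ)
    (hc1 : ContinuousOn g1 (Set.Ioi 0)) (hc2 : ContinuousOn g2 (Set.Ioi 0))
    (hpos1 : ∀ x > 0, 0 ≤ g1 x) (hpos2 : ∀ x > 0, 0 ≤ g2 x)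
    (hint : IntegrableOn (fun s => g1 s * g2 s) (Set.Ioc 0 1))
    (c : ℝ)
    (hlim : Tendsto (fun x => g1 x * g2 x) (nhdsWithin 0 (Set.Ioi 0)) (nhds c))
    (ρ : ℝ → ℝ) (hρ : ContinuousOn ρ (Set.Icc 0 1)) :
    Tendsto (fun n : ℕ => ∑ i ∈ Finset.range n,
        ∫ s in Set.Ioc ((i:ℝ) / n) (((i:ℝ) + 1) / n),
          g1 (((i:ℝ) + 1) / n - s) * g2 (((i:ℝ) + 1) / n - s) * ρ s)
      atTop (nhds (c * ∫ s in (0:ℝ)..1, ρ s)) := by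
  classical
  set G : ℝ → ℝ := fun x => if 0 < x then g1 x * g2 x else c with hGdef
  have hG0 : G 0 = c := by simp [hGdef]
  -- G is continuous on [0, ∞)
  have hGcont : ContinuousOn G (Set.Ici 0) := by
    intro x hx
    rcases eq_or_lt_of_le (Set.mem_Ici.mp hx) with h | h
    · -- x = 0
      subst h
      rw [ContinuousWithinAt, hG0, ← Set.Ioi_insert, nhdsWithin_insert,
        tendsto_sup]
      constructor
      · simpa [hG0] using (tendsto_pure_nhds G (0:ℝ))
      · refine Tendsto.congr' ?_ hlim
        filter_upwards [self_mem_nhdsWithin] with y hy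
        exact (if_pos (hy : (0:ℝ) < y)).symm
    · -- x > 0
      have h1 : ContinuousAt g1 x := hc1.continuousAt (Ioi_mem_nhds h)
      have h2 : ContinuousAt g2 x := hc2.continuousAt (Ioi_mem_nhds h)
      have heq : G =ᶠ[nhds x] fun y => g1 y * g2 y := by
        filter_upwards [Ioi_mem_nhds h] with y hy
        exact if_pos (hy : (0:ℝ) < y)
      exact ((h1.mul h2).congr heq.symm).continuousWithinAt
  -- interval integrability of continuous functions on subintervals of [0,1]
  have hII : ∀ (f : ℝ → ℝ), ContinuousOn f (Set.Icc 0 1) →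
      ∀ a b : ℝ, 0 ≤ a → b ≤ 1 → a ≤ b → IntervalIntegrable f volume a b := by
    intro f hf a b ha hb hab
    apply ContinuousOn.intervalIntegrable
    apply hf.mono
    rw [Set.uIcc_of_le hab]
    exact Set.Icc_subset_Icc ha hb
  rw [Metric.tendsto_atTop]
  intro ε hε
  set M := ∫ s in (0:ℝ)..1, |ρ s| with hM
  have hM0 : 0 ≤ M :=
    intervalIntegral.integral_nonneg (by norm_num) (fun x _ => abs_nonneg _)
  set ε' := ε / (M + 1) with hε'def
  have hε'0 : 0 < ε' := div_pos hε (by linarith)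
  obtain ⟨δ, hδ0, hδ⟩ := Metric.tendsto_nhdsWithin_nhds.1 hlim ε' hε'0
  have hGbound : ∀ x : ℝ, 0 ≤ x → x < δ → |G x - c| ≤ ε' := by
    intro x hx hxδ
    rcases eq_or_lt_of_le hx with h | h
    · rw [← h, hG0]; simpa using hε'0.le
    · have hd := hδ (Set.mem_Ioi.2 h)
        (by simpa [Real.dist_eq, abs_of_pos h] using hxδ)
      rw [Real.dist_eq] at hd
      have hGx : G x = g1 x * g2 x := if_pos h
      rw [hGx]
      exact hd.le
  obtain ⟨N₀, hN₀⟩ := exists_nat_gt (1 / δ)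
  refine ⟨N₀ + 1, fun n hn => ?_⟩
  have hn1 : 1 ≤ n := le_trans (Nat.le_add_left 1 N₀) hn
  have hn0 : (0:ℝ) < n := by exact_mod_cast hn1
  have h1nδ : 1 / (n:ℝ) < δ := by
    rw [div_lt_iff₀ hn0]
    have hN₀n : (N₀:ℝ) + 1 ≤ n := by exact_mod_cast hn
    calc (1:ℝ) = (1/δ) * δ := by field_simp
    _ < ((N₀:ℝ) + 1) * δ := by
        apply mul_lt_mul_of_pos_right _ hδ0
        calc (1:ℝ)/δ < N₀ := hN₀
        _ < (N₀:ℝ) + 1 := by linarith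
    _ ≤ δ * n := by rw [mul_comm]; exact mul_le_mul_of_nonneg_left hN₀n hδ0.le
  -- facts about the subdivision points
  have hfacts : ∀ i ∈ Finset.range n, 0 ≤ (i:ℝ)/n ∧ ((i:ℝ)+1)/n ≤ 1 ∧
      (i:ℝ)/n < ((i:ℝ)+1)/n := by
    intro i hi
    have hi' : (i:ℝ) + 1 ≤ n := by
      exact_mod_cast Nat.succ_le_of_lt (Finset.mem_range.1 hi)
    refine ⟨div_nonneg (Nat.cast_nonneg i) hn0.le, ?_, ?_⟩
    · rw [div_le_one hn0]; exact hi'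
    · rw [div_lt_div_iff₀ hn0 hn0]
      nlinarith [hn0]
  -- adjacent-interval summation
  have hadj : ∀ (f : ℝ → ℝ), ContinuousOn f (Set.Icc 0 1) →
      ∑ i ∈ Finset.range n, ∫ s in ((i:ℝ)/n)..(((i:ℝ)+1)/n), f s
        = ∫ s in (0:ℝ)..1, f s := by
    intro f hf
    have h := intervalIntegral.sum_integral_adjacent_intervals
      (a := fun k : ℕ => (k:ℝ)/n) (n := n) (f := f) (μ := volume) ?_
    · have h0 : ((0:ℕ):ℝ)/n = 0 := by simp
      have hne : ((n:ℕ):ℝ)/n = 1 := by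
        field_simp
      rw [h0, hne] at h
      rw [← h]
      apply Finset.sum_congr rfl
      intro i hi
      norm_num
    · intro k hk
      obtain ⟨h1, h2, h3⟩ := hfacts k (Finset.mem_range.2 hk)
      have : ((k:ℝ)+1) = ((k+1 : ℕ):ℝ) := by push_cast; ring
      rw [this] at h2 h3
      exact hII f hf _ _ h1 h2 h3.le
  -- per-piece estimate
  have key : ∀ i ∈ Finset.range n,
      |(∫ s in Set.Ioc ((i:ℝ)/n) (((i:ℝ)+1)/n),
          g1 (((i:ℝ)+1)/n - s) * g2 (((i:ℝ)+1)/n - s) * ρ s)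
        - c * ∫ s in ((i:ℝ)/n)..(((i:ℝ)+1)/n), ρ s|
        ≤ ε' * ∫ s in ((i:ℝ)/n)..(((i:ℝ)+1)/n), |ρ s| := by
    intro i hi
    obtain ⟨ha0, hb1, hab⟩ := hfacts i hi
    set a := (i:ℝ)/n with hadef
    set b := ((i:ℝ)+1)/n with hbdef
    have hba : b - a = 1/n := by
      rw [hadef, hbdef]; field_simp; ring
    set F : ℝ → ℝ := fun s => G (b - s) * ρ s with hFdef
    -- rewrite the integrand a.e.
    have step1 : (∫ s in Set.Ioc a b, g1 (b - s) * g2 (b - s) * ρ s)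
        = ∫ s in Set.Ioc a b, F s := by
      apply setIntegral_congr_ae measurableSet_Ioc
      have hbs : ∀ᵐ x : ℝ, x ≠ b := by
        rw [ae_iff]
        simpa using (by simp : volume {x : ℝ | x = b} = 0)
      filter_upwards [hbs] with s hs hsmem
      have hslt : s < b := lt_of_le_of_ne hsmem.2 hs
      have : G (b - s) = g1 (b - s) * g2 (b - s) := if_pos (by linarith)
      rw [hFdef]
      dsimp only
      rw [this]
    have hρab : ContinuousOn ρ (Set.Icc a b) :=
      hρ.mono (Set.Icc_subset_Icc ha0 hb1)
    have hFcont : ContinuousOn F (Set.Icc a b) := by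
      apply ContinuousOn.mul ?_ hρab
      apply hGcont.comp (continuous_const.sub continuous_id).continuousOn
      intro s hs
      simp only [Set.mem_Ici, id]
      simp only [Set.mem_Icc] at hs
      show 0 ≤ b - s; linarith [hs.2]
    have hFint : IntegrableOn F (Set.Ioc a b) :=
      (hFcont.integrableOn_Icc).mono_set Set.Ioc_subset_Icc_self
    have hρint : IntegrableOn ρ (Set.Ioc a b) :=
      (hρab.integrableOn_Icc).mono_set Set.Ioc_subset_Icc_self
    have hρabs : IntegrableOn (fun s => ε' * |ρ s|) (Set.Ioc a b) :=
      (hρint.abs.const_mul ε')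
    have step2 : c * ∫ s in a..b, ρ s = ∫ s in Set.Ioc a b, c * ρ s := by
      rw [intervalIntegral.integral_of_le hab.le, MeasureTheory.integral_const_mul]
    have step3 : ε' * ∫ s in a..b, |ρ s| = ∫ s in Set.Ioc a b, ε' * |ρ s| := by
      rw [intervalIntegral.integral_of_le hab.le, MeasureTheory.integral_const_mul]
    rw [step1, step2, step3, ← MeasureTheory.integral_sub hFint (hρint.const_mul c)]
    have hnorm : |∫ s in Set.Ioc a b, (F s - c * ρ s)|
        ≤ ∫ s in Set.Ioc a b, |F s - c * ρ s| := by
      simpa [Real.norm_eq_abs] using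
        MeasureTheory.norm_integral_le_integral_norm (μ := volume.restrict (Set.Ioc a b))
          (f := fun s => F s - c * ρ s)
    refine hnorm.trans ?_
    apply MeasureTheory.integral_mono_of_nonneg
    · filter_upwards with s using abs_nonneg _
    · exact hρabs
    · filter_upwards [ae_restrict_mem measurableSet_Ioc] with s hs
      have h1 : F s - c * ρ s = (G (b - s) - c) * ρ s := by
        rw [hFdef]; ring
      rw [h1, abs_mul]
      apply mul_le_mul_of_nonneg_right _ (abs_nonneg _)
      apply hGbound
      · linarith [hs.2]
      · have : b - s < b - a := by linarith [hs.1]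
        rw [hba] at this
        linarith
  -- assemble
  have hsumρ : ∑ i ∈ Finset.range n, ∫ s in ((i:ℝ)/n)..(((i:ℝ)+1)/n), ρ s
      = ∫ s in (0:ℝ)..1, ρ s := hadj ρ hρ
  have hsumabs : ∑ i ∈ Finset.range n, ∫ s in ((i:ℝ)/n)..(((i:ℝ)+1)/n), |ρ s|
      = M := hadj (fun s => |ρ s|) hρ.abs
  rw [Real.dist_eq]
  have hsplit : (∑ i ∈ Finset.range n,
        ∫ s in Set.Ioc ((i:ℝ)/n) (((i:ℝ)+1)/n),
          g1 (((i:ℝ)+1)/n - s) * g2 (((i:ℝ)+1)/n - s) * ρ s)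
      - c * ∫ s in (0:ℝ)..1, ρ s
      = ∑ i ∈ Finset.range n,
        ((∫ s in Set.Ioc ((i:ℝ)/n) (((i:ℝ)+1)/n),
          g1 (((i:ℝ)+1)/n - s) * g2 (((i:ℝ)+1)/n - s) * ρ s)
        - c * ∫ s in ((i:ℝ)/n)..(((i:ℝ)+1)/n), ρ s) := by
    rw [Finset.sum_sub_distrib, ← Finset.mul_sum, hsumρ]
  rw [hsplit]
  calc |∑ i ∈ Finset.range n, _| ≤ ∑ i ∈ Finset.range n,
        |(∫ s in Set.Ioc ((i:ℝ)/n) (((i:ℝ)+1)/n),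
          g1 (((i:ℝ)+1)/n - s) * g2 (((i:ℝ)+1)/n - s) * ρ s)
        - c * ∫ s in ((i:ℝ)/n)..(((i:ℝ)+1)/n), ρ s| := Finset.abs_sum_le_sum_abs _ _
    _ ≤ ∑ i ∈ Finset.range n, ε' * ∫ s in ((i:ℝ)/n)..(((i:ℝ)+1)/n), |ρ s| :=
        Finset.sum_le_sum key
    _ = ε' * M := by rw [← Finset.mul_sum, hsumabs]
    _ < ε := by
        rw [hε'def]
        rw [div_mul_eq_mul_div, div_lt_iff₀ (by linarith)]
        nlinarith
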